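/- Let P be a probability measure on pairs (x, y), f a scorer with scores s_c(x) ≤ 1, and ν ∈ (1,2). Then the top-1 misclassification probability satisfies P(y ∉ argmax_c s_c(x)) ≤ E[ℓ_ccl(f(x), y)] / (2(ν - 1)), where ℓ_ccl(f(x), y) = (1 - s_y(x))^2 + ∑_{c≠y} (max 0 (ν - 1 + s_c(x)))^2. -/

import Mathlib

open MeasureTheory

lemma key_ineq (ν a b : ℝ) (hν1 : 1 < ν) (hν2 : ν < 2) (hab : a ≤ b) (hb : b ≤ 1) :
    2 * (ν - 1) ≤ (1 - a) ^ 2 + (max 0 (ν - 1 + b)) ^ 2 := by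
  rcases le_or_gt (ν - 1 + b) 0 with h | h
  · rw [max_eq_left h]
    nlinarith [sq_nonneg (1 - a), sq_nonneg (ν - 1)]
  · rw [max_eq_right h.le]
    nlinarith [sq_nonneg (a - b), sq_nonneg (ν - 2), sq_nonneg (2 * b + ν - 2), sq_nonneg (1 - b)]

theorem stmt19 {Ω : Type*} [MeasurableSpace Ω] (μ : Measure Ω) [IsProbabilityMeasure μ]
    {C : ℕ} (ν : ℝ) (hν : ν ∈ Set.Ioo (1 : ℝ) 2)
    (y : Ω → Fin C) (s : Ω → Fin C → ℝ) (hs : ∀ ω c, s ω c ≤ 1)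
    (ℓ : Ω → ℝ)
    (hℓ : ∀ ω, ℓ ω = (1 - s ω (y ω)) ^ 2 +
        ∑ c ∈ Finset.univ.filter (· ≠ y ω), (max 0 (ν - 1 + s ω c)) ^ 2)
    (hint : Integrable ℓ μ)
    (hmeas : MeasurableSet {ω | ∃ c, c ≠ y ω ∧ s ω c ≥ s ω (y ω)}) :
    (μ {ω | ∃ c, c ≠ y ω ∧ s ω c ≥ s ω (y ω)}).toReal
      ≤ (∫ ω, ℓ ω ∂μ) / (2 * (ν - 1)) := by
  obtain ⟨hν1, hν2⟩ := hν
  have hpos : 0 < 2 * (ν - 1) := by linarith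
  set E := {ω | ∃ c, c ≠ y ω ∧ s ω c ≥ s ω (y ω)} with hE
  rw [le_div_iff₀ hpos]
  have hind : ∫ ω, E.indicator (fun _ => 2 * (ν - 1)) ω ∂μ
      = (μ E).toReal * (2 * (ν - 1)) := by
    rw [integral_indicator_const _ hmeas]; simp [mul_comm, measureReal_def]
  rw [← hind]
  apply integral_mono (integrable_indicator_iff hmeas |>.mpr (integrableOn_const (C := 2 * (ν - 1)) (by simp))) hint
  intro ω
  rw [hℓ ω]
  by_cases hω : ω ∈ E
  · rw [Set.indicator_of_mem hω]
    obtain ⟨c, hc, hge⟩ := hω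
    have hmem : c ∈ Finset.univ.filter (· ≠ y ω) := by simp [hc]
    have hsum : (max 0 (ν - 1 + s ω c)) ^ 2
        ≤ ∑ c ∈ Finset.univ.filter (· ≠ y ω), (max 0 (ν - 1 + s ω c)) ^ 2 :=
      Finset.single_le_sum (f := fun c => (max 0 (ν - 1 + s ω c)) ^ 2) (fun i _ => sq_nonneg _) hmem
    have := key_ineq ν (s ω (y ω)) (s ω c) hν1 hν2 hge (hs ω c)
    linarith
  · rw [Set.indicator_of_notMem hω]
    have : 0 ≤ ∑ c ∈ Finset.univ.filter (· ≠ y ω), (max 0 (ν - 1 + s ω c)) ^ 2 :=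
      Finset.sum_nonneg fun i _ => sq_nonneg _
    positivity
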